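/- Let n ≥ 1, let p : ℝ^n → ℝ be twice continuously differentiable with p(w) > 0 for all w, let f : ℝ^n → ℝ^n be continuously differentiable, and let β', γ ∈ ℝ. Then for every z ∈ ℝ^n: − div( w ↦ (β'·f(w) + ((γ−1)/2)·β'·∇(log ∘ p)(w)) · p(w) )(z) + (γ·β'/2)·Δp(z) = − div( w ↦ β'·f(w)·p(w) )(z) + (β'/2)·Δp(z), where ∇ denotes the gradient, div(F)(z) = Σ_{j=1}^n ∂F_j/∂w_j (z) denotes the divergence, and Δp(z) = Σ_{j=1}^n ∂²p/∂w_j² (z) denotes the Laplacian. (This is the Fokker–Planck identity underlying Theorem 4 of the paper: the generalized SDE family with noise parameter γ has the same Fokker–Planck right-hand side as the original BSI SDE, hence identical marginal densities.) -/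

import Mathlib

open Finset

/-- The gradient of `g : ℝⁿ → ℝ`: `grad g z j = ∂g/∂wⱼ (z)`. -/
noncomputable def grad {n : ℕ} (g : (Fin n → ℝ) → ℝ) (z : Fin n → ℝ) : Fin n → ℝ :=
  fun j => fderiv ℝ g z (Pi.single j 1)

/-- The divergence of a vector field `F : ℝⁿ → ℝⁿ`: `div F z = ∑ⱼ ∂Fⱼ/∂wⱼ (z)`. -/
noncomputable def diverg {n : ℕ} (F : (Fin n → ℝ) → (Fin n → ℝ)) (z : Fin n → ℝ) : ℝ :=
  ∑ j, fderiv ℝ (fun w => F w j) z (Pi.single j 1)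

/-- The Laplacian of `g : ℝⁿ → ℝ`: `Δg z = ∑ⱼ ∂²g/∂wⱼ² (z)`. -/
noncomputable def laplacian {n : ℕ} (g : (Fin n → ℝ) → ℝ) (z : Fin n → ℝ) : ℝ :=
  ∑ j, fderiv ℝ (fun w => fderiv ℝ g w (Pi.single j 1)) z (Pi.single j 1)

/-- **Fokker–Planck identity behind Theorem 4 of the paper.** For a positive
`C²` density `p`, a `C¹` drift `f` and any `β', γ`, the Fokker–Planck
right-hand side of the generalized SDE (with score-correction drift and
diffusion `γβ'`) equals that of the original BSI SDE. -/
theorem fokker_planck_family (n : ℕ) (hn : 1 ≤ n) (p : (Fin n → ℝ) → ℝ)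
    (hp : ContDiff ℝ 2 p) (hppos : ∀ w, 0 < p w)
    (f : (Fin n → ℝ) → (Fin n → ℝ)) (hf : ContDiff ℝ 1 f)
    (β' γ : ℝ) (z : Fin n → ℝ) :
    -diverg (fun w j =>
        (β' * f w j + (γ - 1) / 2 * β' * grad (Real.log ∘ p) w j) * p w) z
      + γ * β' / 2 * laplacian p z =
    -diverg (fun w j => β' * f w j * p w) z + β' / 2 * laplacian p z := by
  set c : ℝ := (γ - 1) / 2 * β' with hc
  have hpd : Differentiable ℝ p := hp.differentiable (by norm_num)
  -- pointwise: (grad log p) * p = grad p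
  have hlog : ∀ w (j : Fin n), grad (Real.log ∘ p) w j * p w = fderiv ℝ p w (Pi.single j 1) := by
    intro w j
    have h1 : HasFDerivAt (Real.log ∘ p) ((p w)⁻¹ • fderiv ℝ p w) w := by
      have := (Real.hasDerivAt_log (hppos w).ne').comp_hasFDerivAt w (hpd w).hasFDerivAt
      simpa using this
    have h2 : fderiv ℝ (Real.log ∘ p) w = (p w)⁻¹ • fderiv ℝ p w := h1.fderiv
    simp only [grad, h2, ContinuousLinearMap.smul_apply, smul_eq_mul]
    field_simp
    exact mul_div_cancel_left₀ _ (hppos w).ne'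
  have key : ∀ j : Fin n, (fun w => (β' * f w j + c * grad (Real.log ∘ p) w j) * p w)
      = fun w => β' * f w j * p w + c * fderiv ℝ p w (Pi.single j 1) := by
    intro j
    funext w
    rw [add_mul, mul_assoc c, hlog w j]
  -- differentiability pieces
  have hDf : ∀ j : Fin n, Differentiable ℝ (fun w => β' * f w j * p w) := fun j =>
    (((differentiable_pi.mp (hf.differentiable (by norm_num))) j).const_mul β').mul hpd
  have hfp : ContDiff ℝ 1 (fderiv ℝ p) := hp.fderiv_right (by norm_num)
  have hDp2 : ∀ j : Fin n, Differentiable ℝ (fun w => fderiv ℝ p w (Pi.single j 1)) := by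
    intro j
    exact (ContinuousLinearMap.apply ℝ ℝ (Pi.single j 1)).differentiable.comp
      (hfp.differentiable (by norm_num))
  have hdiv : diverg (fun w j => (β' * f w j + c * grad (Real.log ∘ p) w j) * p w) z
      = diverg (fun w j => β' * f w j * p w) z + c * laplacian p z := by
    unfold diverg laplacian
    rw [Finset.mul_sum, ← Finset.sum_add_distrib]
    refine Finset.sum_congr rfl fun j _ => ?_
    rw [key j, fderiv_fun_add ((hDf j) z) (((hDp2 j).const_mul c) z),
        fderiv_const_mul ((hDp2 j) z) c]
    simp
  rw [hdiv, hc]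
  ring
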